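/- Let R be a (ℤ×ℤ)-graded ring with central units -1 and ε satisfying ε² = 1, whose homogeneous elements satisfy x·y = y·x·(-1)^{(a₁-a₂)(b₁-b₂)}·ε^{a₂b₂} for x of degree (a₁,a₂) and y of degree (b₁,b₂). Fix a central unit u and define x ·_u y = x·y·u^{a₂(b₁-b₂)}. Then x ·_u y = y ·_u x · (-1)^{a₁b₁} · (-u)^{a₂b₁ - a₁b₂} · (-ε)^{a₂b₂}. -/

import Mathlib

/-- Commutativity formula for the u-twisted product: if x·y = y·x·(-1)^((a₁-a₂)(b₁-b₂))·ε^(a₂b₂)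
for x of degree a and y of degree b, then
x ·_u y = y ·_u x · (-1)^(a₁b₁) · (-u)^(a₂b₁-a₁b₂) · (-ε)^(a₂b₂). -/
theorem stmt_5 {R : Type*} [Ring R] (ε u : Rˣ)
    (hεc : ∀ r : R, (ε : R) * r = r * (ε : R))
    (huc : ∀ r : R, (u : R) * r = r * (u : R))
    (hε2 : ε ^ 2 = 1)
    (x y : R) (a b : ℤ × ℤ)
    (hcomm : x * y =
      y * x * (((-1 : Rˣ) ^ ((a.1 - a.2) * (b.1 - b.2)) * ε ^ (a.2 * b.2) : Rˣ) : R)) :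
    x * y * ((u ^ (a.2 * (b.1 - b.2)) : Rˣ) : R) =
      y * x * ((u ^ (b.2 * (a.1 - a.2)) : Rˣ) : R) *
        (((-1 : Rˣ) ^ (a.1 * b.1) * (-u) ^ (a.2 * b.1 - a.1 * b.2) *
          (-ε) ^ (a.2 * b.2) : Rˣ) : R) := by
  have hεm : ε ∈ Subgroup.center Rˣ :=
    Subgroup.mem_center_iff.mpr fun g => Units.ext (hεc g).symm
  have hum : u ∈ Subgroup.center Rˣ :=
    Subgroup.mem_center_iff.mpr fun g => Units.ext (huc g).symm
  have hsm : (-1 : Rˣ) ∈ Subgroup.center Rˣ :=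
    Subgroup.mem_center_iff.mpr fun g => by simp
  set C := Subgroup.center Rˣ
  set E : C := ⟨ε, hεm⟩
  set U : C := ⟨u, hum⟩
  set S : C := ⟨-1, hsm⟩
  letI : CommGroup C := { (inferInstance : Group C) with
    mul_comm := fun a b => Subtype.ext (Subgroup.mem_center_iff.mp b.2 a) }
  have hS2 : S ^ (2 : ℤ) = 1 := Subtype.ext (by simp [S, zpow_two])
  have keyC : S ^ ((a.1 - a.2) * (b.1 - b.2)) * E ^ (a.2 * b.2) *
      U ^ (a.2 * (b.1 - b.2))
      = U ^ (b.2 * (a.1 - a.2)) *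
        (S ^ (a.1 * b.1) * (S * U) ^ (a.2 * b.1 - a.1 * b.2) *
          (S * E) ^ (a.2 * b.2)) := by
    rw [mul_zpow, mul_zpow]
    have h1 : U ^ (a.2 * (b.1 - b.2)) =
        U ^ (b.2 * (a.1 - a.2)) * U ^ (a.2 * b.1 - a.1 * b.2) := by
      rw [← zpow_add]; ring_nf
    have h2 : S ^ ((a.1 - a.2) * (b.1 - b.2)) =
        S ^ (a.1 * b.1) * S ^ (a.2 * b.1 - a.1 * b.2) * S ^ (a.2 * b.2) := by
      rw [← zpow_add, ← zpow_add]
      have h3 : S ^ (2 * (a.2 * b.1)) = 1 := by rw [zpow_mul, hS2, one_zpow]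
      have : a.1 * b.1 + (a.2 * b.1 - a.1 * b.2) + a.2 * b.2 =
          (a.1 - a.2) * (b.1 - b.2) + 2 * (a.2 * b.1) := by ring
      rw [this, zpow_add, h3, mul_one]
    rw [h1, h2]
    simp only [mul_comm, mul_assoc, mul_left_comm]
  have key : ((-1 : Rˣ) ^ ((a.1 - a.2) * (b.1 - b.2)) * ε ^ (a.2 * b.2)) *
      u ^ (a.2 * (b.1 - b.2))
      = u ^ (b.2 * (a.1 - a.2)) *
        ((-1 : Rˣ) ^ (a.1 * b.1) * (-u) ^ (a.2 * b.1 - a.1 * b.2) *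
          (-ε) ^ (a.2 * b.2)) := by
    have hu' : (-u) = ((S * U : C) : Rˣ) := by simp [S, U]
    have hε' : (-ε) = ((S * E : C) : Rˣ) := by simp [S, E]
    rw [hu', hε']
    have := congrArg (fun z : C => (z : Rˣ)) keyC
    simpa using this
  calc x * y * ((u ^ (a.2 * (b.1 - b.2)) : Rˣ) : R)
      = y * x * ((((-1 : Rˣ) ^ ((a.1 - a.2) * (b.1 - b.2)) * ε ^ (a.2 * b.2)) *
          u ^ (a.2 * (b.1 - b.2)) : Rˣ) : R) := by
        rw [hcomm]; simp [mul_assoc]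
    _ = _ := by rw [key]; simp [mul_assoc]
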